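/- Let G be an r-regular simple graph with n vertices and m ≥ 1 edges, and let q_1 ≤ q_2 ≤ … ≤ q_n = 2r be the eigenvalues of Q(G) listed with multiplicity. Then f(λ, G^{+11}) = [(λ-m-2r)(λ-2m-n+2) - mn]·(λ-m-n+2)^{m-1}·∏_{i=1}^{n-1}(λ - m - q_i). -/

import Mathlib

open Classical

/-- The four symbols `0, 1, +, -` used in `xyz`-transformations. -/
inductive XYZ : Type
  | zero | one | plus | minus

namespace XYZ

/-- The relation on the vertices of a graph `H` given by a symbol:
`0` gives the empty graph, `1` the complete graph, `+` the graph itself,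
`-` its complement. -/
def rel {W : Type*} (H : SimpleGraph W) : XYZ → W → W → Prop
  | .zero => fun _ _ => False
  | .one  => fun u v => u ≠ v
  | .plus => fun u v => H.Adj u v
  | .minus => fun u v => u ≠ v ∧ ¬ H.Adj u v

/-- The incidence relation between a vertex and an edge given by a symbol `z`:
`+` means incident, `-` means non-incident, `0` never, `1` always. -/
def inc {W : Type*} (G : SimpleGraph W) : XYZ → W → G.edgeSet → Prop
  | .zero => fun _ _ => False
  | .one  => fun _ _ => True
  | .plus => fun v e => v ∈ (e : Sym2 W)
  | .minus => fun v e => v ∉ (e : Sym2 W)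

theorem rel_symm {W : Type*} (H : SimpleGraph W) (x : XYZ) {u v : W}
    (h : rel H x u v) : rel H x v u := by
  cases x with
  | zero => exact h.elim
  | one => exact (h : u ≠ v).symm
  | plus => exact H.adj_symm h
  | minus => exact ⟨(h.1).symm, fun h' => h.2 (H.adj_symm h')⟩

theorem rel_irrefl {W : Type*} (H : SimpleGraph W) (x : XYZ) {u : W}
    (h : rel H x u u) : False := by
  cases x with
  | zero => exact h
  | one => exact h rfl
  | plus => exact H.ne_of_adj h rfl
  | minus => exact h.1 rfl

end XYZ

/-- The `xyz`-transformation `G^{xyz}` of a graph `G`: its vertex set is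
`V(G) ⊕ E(G)`; two vertices of `G` are adjacent according to the symbol `x`
(applied to `G`), two edges according to the symbol `y` (applied to the line
graph of `G`), and a vertex and an edge according to the symbol `z`
(`+` = incidence graph `B(G)`, `-` = non-incidence graph `B^c(G)`,
`0` = no vertex-edge edges, `1` = all vertex-edge edges). -/
def xyzTransform {V : Type*} (G : SimpleGraph V) (x y z : XYZ) :
    SimpleGraph (V ⊕ G.edgeSet) where
  Adj a b :=
    match a, b with
    | Sum.inl u, Sum.inl v => XYZ.rel G x u v
    | Sum.inr e, Sum.inr f => XYZ.rel G.lineGraph y e f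
    | Sum.inl v, Sum.inr e => XYZ.inc G z v e
    | Sum.inr e, Sum.inl v => XYZ.inc G z v e
  symm := by
    refine ⟨?_⟩
    rintro (u | e) (v | f) h
    · exact XYZ.rel_symm G x h
    · exact h
    · exact h
    · exact XYZ.rel_symm G.lineGraph y h
  loopless := by
    refine ⟨?_⟩
    rintro (u | e) h
    · exact XYZ.rel_irrefl G x h
    · exact XYZ.rel_irrefl G.lineGraph y h

/-- The signless Laplacian matrix `Q(G) = D(G) + A(G)` of a graph. -/
noncomputable def signlessLaplacian {V : Type*} [Fintype V] (G : SimpleGraph V) :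
    Matrix V V ℝ :=
  Matrix.of fun u v =>
    (if u = v then (G.degree u : ℝ) else 0) + (if G.Adj u v then 1 else 0)

/-- The signless Laplacian characteristic polynomial
`f(λ, G) = det (λ I - Q(G))`, evaluated at a real number `λ`. -/
noncomputable def fQ {V : Type*} [Fintype V] (G : SimpleGraph V) (lam : ℝ) : ℝ :=
  Matrix.det (lam • (1 : Matrix V V ℝ) - signlessLaplacian G)

open Matrix Finset

section Helpers
variable {V : Type*} [Fintype V] (G : SimpleGraph V)

lemma xyz_degree_inl (v : V) :
    (xyzTransform G XYZ.plus XYZ.one XYZ.one).degree (Sum.inl v) =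
      G.degree v + Fintype.card G.edgeSet := by
  classical
  rw [SimpleGraph.degree, SimpleGraph.neighborFinset_eq_filter, Finset.card_filter]
  rw [Fintype.sum_sum_type]
  congr 1
  · rw [SimpleGraph.degree, SimpleGraph.neighborFinset_eq_filter, Finset.card_filter]
    apply Finset.sum_congr rfl
    intro u _
    by_cases h : G.Adj v u <;> simp [xyzTransform, XYZ.rel, h]
  · simp [xyzTransform, XYZ.inc]

lemma xyz_degree_inr (e : G.edgeSet) :
    (xyzTransform G XYZ.plus XYZ.one XYZ.one).degree (Sum.inr e) =
      Fintype.card V + (Fintype.card G.edgeSet - 1) := by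
  classical
  rw [SimpleGraph.degree, SimpleGraph.neighborFinset_eq_filter, Finset.card_filter]
  rw [Fintype.sum_sum_type]
  congr 1
  · simp [xyzTransform, XYZ.inc]
  · have : ∀ f : G.edgeSet,
        (xyzTransform G XYZ.plus XYZ.one XYZ.one).Adj (Sum.inr e) (Sum.inr f) ↔ e ≠ f := by
      intro f; rfl
    rw [Finset.sum_congr rfl (fun f _ => by rw [if_congr (this f) rfl rfl])]
    rw [← Finset.card_filter, Finset.filter_ne, Finset.card_erase_of_mem (Finset.mem_univ e),
      Finset.card_univ]

end Helpers
section Helpers2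
open Matrix Finset
variable {V : Type*} [Fintype V] (G : SimpleGraph V)

lemma sum_signlessLaplacian_row {r : ℕ} (hreg : G.IsRegularOfDegree r) (u : V) :
    ∑ v, signlessLaplacian G u v = 2 * r := by
  classical
  simp only [signlessLaplacian, Matrix.of_apply, Finset.sum_add_distrib]
  rw [Finset.sum_ite_eq Finset.univ u (fun v => (G.degree u : ℝ))]
  have h2 : (∑ v, if G.Adj u v then (1:ℝ) else 0) = G.degree u := by
    rw [SimpleGraph.degree, SimpleGraph.neighborFinset_eq_filter, Finset.card_filter]
    push_cast
    rfl
  rw [h2]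
  simp [hreg u]
  ring

end Helpers2
section Helpers3
open Matrix Finset
variable {V : Type*} [Fintype V] (G : SimpleGraph V)

lemma xyz_blocks (hm1 : 1 ≤ Fintype.card G.edgeSet) (lam : ℝ) :
    lam • (1 : Matrix (V ⊕ G.edgeSet) (V ⊕ G.edgeSet) ℝ)
        - signlessLaplacian (xyzTransform G XYZ.plus XYZ.one XYZ.one) =
      Matrix.fromBlocks
        ((lam - Fintype.card G.edgeSet) • 1 - signlessLaplacian G)
        (Matrix.of fun _ _ => -1) (Matrix.of fun _ _ => -1)
        ((lam - (Fintype.card V + Fintype.card G.edgeSet - 2)) • 1 - Matrix.of fun _ _ => 1) := by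
  classical
  set m := Fintype.card G.edgeSet with hm
  set n := Fintype.card V with hn
  ext a b
  rcases a with u | e <;> rcases b with v | f
  · have hAdj : (xyzTransform G XYZ.plus XYZ.one XYZ.one).Adj (Sum.inl u) (Sum.inl v)
        ↔ G.Adj u v := Iff.rfl
    by_cases huv : u = v
    · subst huv
      simp [signlessLaplacian, Matrix.one_apply, xyz_degree_inl, hAdj, ← hm]
      ring
    · have : Sum.inl u ≠ (Sum.inl v : V ⊕ G.edgeSet) := by simpa using huv
      simp [signlessLaplacian, Matrix.one_apply, this, huv, hAdj]
  · have hAdj : (xyzTransform G XYZ.plus XYZ.one XYZ.one).Adj (Sum.inl u) (Sum.inr f) := trivial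
    simp [signlessLaplacian, Matrix.one_apply, hAdj]
  · have hAdj : (xyzTransform G XYZ.plus XYZ.one XYZ.one).Adj (Sum.inr e) (Sum.inl v) := trivial
    simp [signlessLaplacian, Matrix.one_apply, hAdj]
  · have hAdj : (xyzTransform G XYZ.plus XYZ.one XYZ.one).Adj (Sum.inr e) (Sum.inr f)
        ↔ e ≠ f := Iff.rfl
    have hdeg : ((xyzTransform G XYZ.plus XYZ.one XYZ.one).degree (Sum.inr e) : ℝ)
        = n + m - 1 := by
      rw [xyz_degree_inr]
      rw [hn, hm]
      rw [Nat.cast_add, Nat.cast_sub (show 1 ≤ Fintype.card G.edgeSet from hm1)]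
      push_cast
      ring
    by_cases hef : e = f
    · subst hef
      simp [signlessLaplacian, Matrix.one_apply, hAdj, hdeg]
      ring
    · have : Sum.inr e ≠ (Sum.inr f : V ⊕ G.edgeSet) := by simpa using hef
      simp [signlessLaplacian, Matrix.one_apply, this, hef, hAdj]

end Helpers3
section Helpers4
open Matrix Finset

variable {ι : Type*} [Fintype ι] [DecidableEq ι]

/-- All-ones matrix. -/
noncomputable def Jmat (ι : Type*) : Matrix ι ι ℝ := Matrix.of fun _ _ => 1

lemma J_mul_J : Jmat ι * Jmat ι = (Fintype.card ι : ℝ) • Jmat ι := by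
  ext i j
  simp [Jmat, Matrix.mul_apply, Finset.card_univ]

lemma inv_sum_eq {M : Matrix ι ι ℝ} {β : ℝ} (hβ : β ≠ 0) (hdet : IsUnit M.det)
    (hrow : ∀ i, ∑ j, M i j = β) (i : ι) : ∑ j, M⁻¹ i j = β⁻¹ := by
  have hMv : M *ᵥ (fun _ => (1:ℝ)) = fun _ => β := by
    funext i; simpa [Matrix.mulVec, dotProduct] using hrow i
  have h1 : M⁻¹ *ᵥ (M *ᵥ (fun _ => (1:ℝ))) = fun _ => (1:ℝ) := by
    rw [Matrix.mulVec_mulVec, Matrix.nonsing_inv_mul M hdet]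
    funext i; simp [Matrix.mulVec, dotProduct, Matrix.one_apply]
  rw [hMv] at h1
  have h2 : (fun _ : ι => (β:ℝ)) = β • (fun _ : ι => (1:ℝ)) := by funext i; simp
  rw [h2, Matrix.mulVec_smul] at h1
  have h3 := congrFun h1 i
  simp only [Pi.smul_apply, Matrix.mulVec, dotProduct, smul_eq_mul, mul_one] at h3
  field_simp at h3 ⊢
  linarith [h3]

lemma det_sub_smul_J {M : Matrix ι ι ℝ} {β : ℝ} (c : ℝ) (hβ : β ≠ 0) (hdet : IsUnit M.det)
    (hrow : ∀ i, ∑ j, M i j = β) :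
    (M - c • Jmat ι).det = M.det * (1 - c * Fintype.card ι * β⁻¹) := by
  have hUV : (Matrix.replicateCol Unit (fun _ : ι => (1:ℝ))) * (Matrix.replicateRow Unit (fun _ : ι => -c))
      = -(c • Jmat ι) := by
    ext i j
    simp [Matrix.mul_apply, Jmat]
  have h := Matrix.det_add_mul (A := M) (Matrix.replicateCol Unit (fun _ : ι => (1:ℝ)))
    (Matrix.replicateRow Unit (fun _ : ι => -c)) hdet
  rw [hUV] at h
  rw [← sub_eq_add_neg] at h
  rw [h]
  congr 1
  rw [Matrix.det_unique]
  have hsum : ∀ i, ∑ j, M⁻¹ i j = β⁻¹ := inv_sum_eq hβ hdet hrow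
  have : (Matrix.replicateRow Unit (fun _ : ι => -c) * M⁻¹ * Matrix.replicateCol Unit (fun _ : ι => (1:ℝ)))
      default default = -(c * Fintype.card ι * β⁻¹) := by
    simp only [Matrix.mul_apply, Matrix.replicateRow_apply, Matrix.replicateCol_apply, mul_one]
    rw [Finset.sum_comm]
    simp only [neg_mul, Finset.sum_neg_distrib]
    have hx : ∀ x : ι, ∑ y : ι, c * M⁻¹ x y = c * β⁻¹ := fun x => by
      rw [← Finset.mul_sum, hsum]
    rw [Finset.sum_congr rfl (fun x _ => hx x), Finset.sum_const, Finset.card_univ]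
    push_cast
    ring
  rw [Matrix.add_apply, Matrix.one_apply_eq, this]
  ring

end Helpers4
section Helpers5
open Matrix Finset

variable {ι : Type*} [Fintype ι] [DecidableEq ι]

lemma det_smul_one_sub_J (a : ℝ) (ha : a ≠ 0) (hcard : 1 ≤ Fintype.card ι) :
    (a • (1 : Matrix ι ι ℝ) - Jmat ι).det
      = a ^ (Fintype.card ι - 1) * (a - Fintype.card ι) := by
  have hdet : (a • (1 : Matrix ι ι ℝ)).det = a ^ Fintype.card ι := by
    rw [Matrix.det_smul, Matrix.det_one, mul_one]
  have hrow : ∀ i, ∑ j, (a • (1 : Matrix ι ι ℝ)) i j = a := by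
    intro i
    simp [Matrix.one_apply, Finset.sum_ite_eq]
  have h := det_sub_smul_J (M := a • (1 : Matrix ι ι ℝ)) (β := a) 1 ha
    (by rw [hdet]; exact (pow_ne_zero _ ha).isUnit) hrow
  rw [one_smul] at h
  rw [h, hdet]
  have : a ^ Fintype.card ι = a ^ (Fintype.card ι - 1) * a := by
    rw [← pow_succ]
    congr 1
    omega
  rw [this]
  field_simp

lemma DX_one (a : ℝ) (ha : a ≠ 0) (hb : a - Fintype.card ι ≠ 0) :
    (a • (1 : Matrix ι ι ℝ) - Jmat ι) *
      (a⁻¹ • (1 : Matrix ι ι ℝ) + (a * (a - Fintype.card ι))⁻¹ • Jmat ι) = 1 := by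
  set t : ℝ := (a * (a - Fintype.card ι))⁻¹ with ht
  set J : Matrix ι ι ℝ := Jmat ι with hJ
  have e1 : (a • (1 : Matrix ι ι ℝ)) * (a⁻¹ • 1) = 1 := by
    rw [smul_mul_assoc, one_mul, smul_smul, mul_inv_cancel₀ ha, one_smul]
  have e2 : (a • (1 : Matrix ι ι ℝ)) * (t • J) = (a * t) • J := by
    rw [smul_mul_assoc, mul_smul_comm, one_mul, smul_smul]
  have e3 : J * (a⁻¹ • (1 : Matrix ι ι ℝ)) = a⁻¹ • J := by
    rw [mul_smul_comm, mul_one]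
  have e4 : J * (t • J) = (t * Fintype.card ι) • J := by
    rw [mul_smul_comm, hJ, J_mul_J, smul_smul, mul_comm t]
  rw [Matrix.sub_mul, Matrix.mul_add, Matrix.mul_add, e1, e2, e3, e4]
  have hcoef : a * t - (a⁻¹ + t * Fintype.card ι) = 0 := by
    rw [ht]
    field_simp
    ring
  have hz : (a * t) • J - (a⁻¹ • J + (t * Fintype.card ι) • J) = (0 : Matrix ι ι ℝ) := by
    rw [← add_smul, ← sub_smul, hcoef, zero_smul]
  rw [add_sub_assoc, hz, add_zero]

lemma BXC {W : Type*} [Fintype W] (a t : ℝ) :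
    (Matrix.of fun _ _ => (-1:ℝ) : Matrix W ι ℝ) *
        (a⁻¹ • (1 : Matrix ι ι ℝ) + t • Jmat ι) *
        (Matrix.of fun _ _ => (-1:ℝ) : Matrix ι W ℝ)
      = (Fintype.card ι * (a⁻¹ + Fintype.card ι * t)) • Jmat W := by
  have h1 : (Matrix.of fun _ _ => (-1:ℝ) : Matrix W ι ℝ) *
      (a⁻¹ • (1 : Matrix ι ι ℝ) + t • Jmat ι)
      = Matrix.of fun _ _ => -(a⁻¹ + Fintype.card ι * t) := by
    ext u e
    simp [Matrix.mul_apply, Matrix.one_apply, Jmat, mul_add, Finset.sum_add_distrib,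
      Finset.sum_ite_eq', Finset.card_univ]
    ring
  rw [h1]
  ext u v
  simp [Matrix.mul_apply, Jmat, Finset.card_univ]
  ring

end Helpers5
open Matrix Finset in
theorem signless_charpoly_xyz_p11 {V : Type*} [Fintype V] (G : SimpleGraph V) (r n m : ℕ)
    (hn : Fintype.card V = n) (hm : Fintype.card G.edgeSet = m)
    (hreg : G.IsRegularOfDegree r) (hm1 : 1 ≤ m) (hn0 : 0 < n)
    (q : Fin n → ℝ) (hmono : Monotone q)
    (hlast : q ⟨n - 1, by omega⟩ = 2 * r)
    (hq : ∀ x : ℝ, fQ G x = ∏ i : Fin n, (x - q i)) :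
    ∀ lam : ℝ,
      fQ (xyzTransform G XYZ.plus XYZ.one XYZ.one) lam =
        ((lam - m - 2 * r) * (lam - 2 * m - n + 2) - m * n) * (lam - m - n + 2) ^ (m - 1) *
          ∏ i : Fin (n - 1), (lam - m - (q (Fin.castLE (Nat.sub_le n 1) i))) := by
  classical
  obtain ⟨k, rfl⟩ : ∃ k, n = k + 1 := ⟨n - 1, by omega⟩
  have hlast' : q (Fin.last k) = 2 * r := hlast
  -- the "bad" set of parameters
  set S : Set ℝ := insert ((k:ℝ) + 1 + m - 2) (insert ((k:ℝ) + 1 + 2 * m - 2)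
      (Set.range fun i : Fin (k + 1) => (m : ℝ) + q i)) with hSdef
  have hScount : S.Countable := by
    apply Set.Countable.insert
    apply Set.Countable.insert
    exact (Set.finite_range _).countable
  have hdense : Dense Sᶜ := hScount.dense_compl ℝ
  -- the two sides as functions of lam
  have key : ∀ lam : ℝ, lam ∈ Sᶜ →
      fQ (xyzTransform G XYZ.plus XYZ.one XYZ.one) lam =
        ((lam - m - 2 * r) * (lam - 2 * m - (k+1) + 2) - m * (k+1)) *
            (lam - m - (k+1) + 2) ^ (m - 1) *
          ∏ i : Fin (k + 1 - 1), (lam - m - (q (Fin.castLE (Nat.sub_le (k+1) 1) i))) := by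
    intro lam hlam
    simp only [hSdef, Set.mem_compl_iff, Set.mem_insert_iff, Set.mem_range, not_or,
      not_exists] at hlam
    obtain ⟨h1, h2, h3⟩ := hlam
    have ha : lam - ((↑(k+1) : ℝ) + ↑m - 2) ≠ 0 := by
      intro h; apply h1; push_cast at h ⊢; linarith
    have hb : lam - ((↑(k+1) : ℝ) + ↑m - 2) - m ≠ 0 := by
      intro h; apply h2; push_cast at h ⊢; linarith
    have hqi : ∀ i : Fin (k+1), lam - (m:ℝ) - q i ≠ 0 := by
      intro i h; apply h3 i; linarith
    have hβ : lam - (m:ℝ) - 2 * r ≠ 0 := by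
      have := hqi (Fin.last k); rwa [hlast'] at this
    -- block decomposition
    have hblocks := xyz_blocks G (by rw [hm]; exact hm1) lam
    rw [hm, hn] at hblocks
    have hJE : (Matrix.of fun _ _ => (1:ℝ) : Matrix G.edgeSet G.edgeSet ℝ) = Jmat G.edgeSet :=
      rfl
    rw [hJE] at hblocks
    have hfq : fQ (xyzTransform G XYZ.plus XYZ.one XYZ.one) lam
        = (lam • (1 : Matrix (V ⊕ G.edgeSet) (V ⊕ G.edgeSet) ℝ)
            - signlessLaplacian (xyzTransform G XYZ.plus XYZ.one XYZ.one)).det := by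
      rw [fQ]
      congr!
    rw [hfq, hblocks]
    -- invertibility of the lower-right block
    have hcardE : (Fintype.card G.edgeSet : ℝ) = (m : ℝ) := by rw [hm]
    have hDX := DX_one (ι := G.edgeSet) (lam - ((↑(k+1) : ℝ) + ↑m - 2))
      ha (by rw [hcardE]; exact hb)
    have hXD := mul_eq_one_comm.mp hDX
    haveI iD : Invertible ((lam - ((↑(k+1) : ℝ) + ↑m - 2)) • (1 : Matrix G.edgeSet G.edgeSet ℝ)
        - Jmat G.edgeSet) := ⟨_, hXD, hDX⟩
    rw [Matrix.det_fromBlocks₂₂]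
    have hinv : ⅟((lam - ((↑(k+1) : ℝ) + ↑m - 2)) • (1 : Matrix G.edgeSet G.edgeSet ℝ)
        - Jmat G.edgeSet) =
        (lam - ((↑(k+1) : ℝ) + ↑m - 2))⁻¹ • (1 : Matrix G.edgeSet G.edgeSet ℝ) +
          ((lam - ((↑(k+1) : ℝ) + ↑m - 2)) *
            ((lam - ((↑(k+1) : ℝ) + ↑m - 2)) - Fintype.card G.edgeSet))⁻¹ • Jmat G.edgeSet :=
      invOf_eq_right_inv hDX
    rw [hinv, BXC]
    -- determinant of the lower-right block
    rw [det_smul_one_sub_J _ ha (by rw [hm]; exact hm1), hcardE]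
    -- determinant of the Schur complement
    set a : ℝ := lam - ((↑(k+1) : ℝ) + ↑m - 2) with hadef
    set c : ℝ := (m : ℝ) * (a⁻¹ + (m:ℝ) * (a * (a - m))⁻¹) with hcdef
    have hrowA : ∀ u : V, ∑ v, ((lam - (m:ℝ)) • (1 : Matrix V V ℝ) - signlessLaplacian G) u v
        = lam - m - 2 * r := by
      intro u
      simp only [Matrix.sub_apply, Matrix.smul_apply, Matrix.one_apply, smul_eq_mul,
        Finset.sum_sub_distrib, mul_ite, mul_one, mul_zero]
      rw [sum_signlessLaplacian_row G hreg u,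
        Finset.sum_ite_eq Finset.univ u (fun _ => lam - (m:ℝ))]
      simp
    have hdetA : ((lam - (m:ℝ)) • (1 : Matrix V V ℝ) - signlessLaplacian G).det
        = ∏ i : Fin (k+1), (lam - m - q i) := by
      have := hq (lam - m)
      rwa [fQ] at this
    have hAunit : IsUnit ((lam - (m:ℝ)) • (1 : Matrix V V ℝ) - signlessLaplacian G).det := by
      rw [hdetA]
      exact (Finset.prod_ne_zero_iff.mpr fun i _ => hqi i).isUnit
    rw [det_sub_smul_J (β := lam - m - 2*r) _ hβ hAunit hrowA, hdetA, hn]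
    -- split the product
    have hsplit : ∏ i : Fin (k+1), (lam - (m:ℝ) - q i)
        = (∏ i : Fin k, (lam - (m:ℝ) - q i.castSucc)) * (lam - m - 2*r) := by
      rw [Fin.prod_univ_castSucc, hlast']
    have hP : ∏ i : Fin (k + 1 - 1), (lam - (m:ℝ) - (q (Fin.castLE (Nat.sub_le (k+1) 1) i)))
        = ∏ i : Fin k, (lam - (m:ℝ) - q i.castSucc) := by
      apply Fintype.prod_equiv (finCongr (Nat.succ_sub_one k))
      intro i
      congr 1
    rw [hsplit, hP]
    -- final algebra
    have hc : c * (a - m) = m := by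
      rw [hcdef]
      field_simp
      ring
    rw [hm]
    rw [show lam - ↑m - ((k:ℝ) + 1) + 2 = a from by rw [hadef]; push_cast; ring,
        show lam - 2 * ↑m - ((k:ℝ) + 1) + 2 = a - ↑m from by rw [hadef]; push_cast; ring]
    rw [hcdef]
    push_cast
    field_simp
    ring
  -- extend by continuity
  have hcont1 : Continuous fun lam : ℝ => fQ (xyzTransform G XYZ.plus XYZ.one XYZ.one) lam := by
    have h2 : Continuous fun lam : ℝ =>
        (lam • (1 : Matrix (V ⊕ G.edgeSet) (V ⊕ G.edgeSet) ℝ)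
          - signlessLaplacian (xyzTransform G XYZ.plus XYZ.one XYZ.one)).det := by
      apply Continuous.matrix_det
      apply continuous_matrix
      intro i j
      simp only [Matrix.sub_apply, Matrix.smul_apply, smul_eq_mul]
      exact (continuous_id.mul continuous_const).sub continuous_const
    have heq : (fun lam : ℝ => fQ (xyzTransform G XYZ.plus XYZ.one XYZ.one) lam)
        = fun lam : ℝ =>
        (lam • (1 : Matrix (V ⊕ G.edgeSet) (V ⊕ G.edgeSet) ℝ)
          - signlessLaplacian (xyzTransform G XYZ.plus XYZ.one XYZ.one)).det := by
      funext x
      rw [fQ]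
      congr!
    rw [heq]
    exact h2
  have hcont2 : Continuous fun lam : ℝ =>
      ((lam - m - 2 * r) * (lam - 2 * m - ((k:ℝ)+1) + 2) - m * ((k:ℝ)+1)) *
          (lam - m - ((k:ℝ)+1) + 2) ^ (m - 1) *
        ∏ i : Fin (k + 1 - 1), (lam - m - (q (Fin.castLE (Nat.sub_le (k+1) 1) i))) := by
    fun_prop
  have := Continuous.ext_on hdense hcont1 hcont2 (fun lam hlam => by
    have h := key lam hlam
    push_cast at h ⊢
    convert h using 2)
  intro lam
  have h := congrFun this lam
  push_cast at h ⊢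
  convert h using 2
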